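/- Let ν > 0, h₁ > 0, 0 < ε* < ν, γ₀ = 0.6383·√(h₁/(2ν)), γ₁ = 1/(2(ν−ε*)), and let B ≥ 0 (the norm ‖b‖₁ of initial vorticity data). If B ≤ (1/4)·min{1/γ₀, 1/(γ₁ e^{(−2ν+ε*)h₁})} and (1 − √(1−4Bγ₀)) + (1 − √((1 − 4Bγ₁e^{(−2ν+ε*)h₁})/(γ₁/γ₀ + 1))) < 1, then there exist σ₀, σ₁ > 0 such that B + γ₀σ₀² ≤ σ₀, B·e^{(−2ν+ε*)h₁} + γ₀σ₀² + γ₁σ₁² ≤ σ₁, and 2γ₀σ₀ + 2γ₁σ₁ < 1. -/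

import Mathlib

set_option maxHeartbeats 1600000 in
theorem stmt_17 (ν h₁ εs γ₀ γ₁ B : ℝ)
    (hν : 0 < ν) (hh₁ : 0 < h₁) (hεs : 0 < εs) (hεsν : εs < ν)
    (hγ₀ : γ₀ = 0.6383 * Real.sqrt (h₁ / (2 * ν)))
    (hγ₁ : γ₁ = 1 / (2 * (ν - εs)))
    (hB : 0 ≤ B)
    (hB1 : B ≤ (1 / 4) * min (1 / γ₀) (1 / (γ₁ * Real.exp ((-2 * ν + εs) * h₁))))
    (hB2 : (1 - Real.sqrt (1 - 4 * B * γ₀)) +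
        (1 - Real.sqrt ((1 - 4 * B * γ₁ * Real.exp ((-2 * ν + εs) * h₁)) / (γ₁ / γ₀ + 1))) < 1) :
    ∃ σ₀ σ₁ : ℝ, 0 < σ₀ ∧ 0 < σ₁ ∧
      B + γ₀ * σ₀ ^ 2 ≤ σ₀ ∧
      B * Real.exp ((-2 * ν + εs) * h₁) + γ₀ * σ₀ ^ 2 + γ₁ * σ₁ ^ 2 ≤ σ₁ ∧
      2 * γ₀ * σ₀ + 2 * γ₁ * σ₁ < 1 := by
  set e := Real.exp ((-2 * ν + εs) * h₁) with he
  have hepos : 0 < e := Real.exp_pos _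
  have hγ₀pos : 0 < γ₀ := by
    rw [hγ₀]
    have h : 0 < Real.sqrt (h₁ / (2 * ν)) := Real.sqrt_pos.mpr (by positivity)
    nlinarith
  have hγ₁pos : 0 < γ₁ := by rw [hγ₁]; exact div_pos one_pos (by linarith)
  rcases eq_or_lt_of_le hB with hB0 | hBpos
  · -- B = 0 case
    have hsum : 0 < γ₀ + γ₁ := by linarith
    refine ⟨1 / (4 * (γ₀ + γ₁)), 1 / (4 * (γ₀ + γ₁)),
      div_pos one_pos (by linarith), div_pos one_pos (by linarith), ?_, ?_, ?_⟩
    all_goals {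
      set σ := 1 / (4 * (γ₀ + γ₁)) with hσ
      have hσpos : 0 < σ := div_pos one_pos (by linarith)
      have hσeq : σ * (4 * (γ₀ + γ₁)) = 1 := by rw [hσ]; field_simp
      first | rw [← hB0] | skip
      nlinarith [mul_pos hγ₀pos hσpos, mul_pos hγ₁pos hσpos, sq_nonneg σ,
        mul_pos (mul_pos hγ₀pos hσpos) hσpos, mul_pos (mul_pos hγ₁pos hσpos) hσpos]
    }
  · -- B > 0 case
    have hmin₀ : B ≤ (1 / 4) * (1 / γ₀) := le_trans hB1 (by
      have := min_le_left (1 / γ₀) (1 / (γ₁ * e)); linarith)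
    have hmin₁ : B ≤ (1 / 4) * (1 / (γ₁ * e)) := le_trans hB1 (by
      have := min_le_right (1 / γ₀) (1 / (γ₁ * e)); linarith)
    have h4B₀ : 4 * B * γ₀ ≤ 1 := by
      have h := mul_le_mul_of_nonneg_right hmin₀ (le_of_lt hγ₀pos)
      have h2 : (1 / 4) * (1 / γ₀) * γ₀ = 1 / 4 := by field_simp
      nlinarith
    have h4B₁ : 4 * B * γ₁ * e ≤ 1 := by
      have h := mul_le_mul_of_nonneg_right hmin₁ (le_of_lt (mul_pos hγ₁pos hepos))
      have h2 : (1 / 4) * (1 / (γ₁ * e)) * (γ₁ * e) = 1 / 4 := by field_simp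
      nlinarith
    set r₀ := Real.sqrt (1 - 4 * B * γ₀) with hr₀
    have hr₀sq : r₀ ^ 2 = 1 - 4 * B * γ₀ := Real.sq_sqrt (by linarith)
    have hr₀nonneg : 0 ≤ r₀ := Real.sqrt_nonneg _
    have hr₀lt1 : r₀ < 1 := by nlinarith
    set σ₀ := (1 - r₀) / (2 * γ₀) with hσ₀
    have hσ₀pos : 0 < σ₀ := div_pos (by linarith) (by linarith)
    have hσ₀eq : γ₀ * σ₀ = (1 - r₀) / 2 := by rw [hσ₀]; field_simp
    have hEq0 : B + γ₀ * σ₀ ^ 2 = σ₀ := by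
      have h2 : (γ₀ * σ₀) ^ 2 = ((1 - r₀) / 2) ^ 2 := by rw [hσ₀eq]
      have h : γ₀ * (B + γ₀ * σ₀ ^ 2) = γ₀ * σ₀ := by
        linear_combination h2 - hσ₀eq + (1 / 4) * hr₀sq
      exact mul_left_cancel₀ (ne_of_gt hγ₀pos) h
    -- s₁
    set s₁ := Real.sqrt ((1 - 4 * B * γ₁ * e) / (γ₁ / γ₀ + 1)) with hs₁
    have hdenpos : 0 < γ₁ / γ₀ + 1 := by positivity
    have hs₁sq : s₁ ^ 2 = (1 - 4 * B * γ₁ * e) / (γ₁ / γ₀ + 1) :=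
      Real.sq_sqrt (div_nonneg (by linarith) (le_of_lt hdenpos))
    have hs₁nonneg : 0 ≤ s₁ := Real.sqrt_nonneg _
    have hs₁γ : s₁ ^ 2 * (γ₁ + γ₀) = (1 - 4 * B * γ₁ * e) * γ₀ := by
      rw [hs₁sq]; field_simp
    have hx₀lt : 1 - r₀ < s₁ := by linarith
    have hx₀sq : (1 - r₀) ^ 2 ≤ s₁ ^ 2 := by nlinarith
    -- the quantity under the second square root
    have hkey : s₁ ^ 2 ≤ 1 - 4 * γ₁ * (B * e + γ₀ * σ₀ ^ 2) := by
      have h1 : γ₀ * (γ₀ * σ₀ ^ 2) = ((1 - r₀) / 2) ^ 2 := by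
        rw [← hσ₀eq]; ring
      nlinarith [hs₁γ, hx₀sq, mul_pos hγ₁pos hγ₀pos]
    set C := B * e + γ₀ * σ₀ ^ 2 with hC
    have hCpos : 0 < C := by positivity
    set r₁ := Real.sqrt (1 - 4 * γ₁ * C) with hr₁
    have hr₁sq : r₁ ^ 2 = 1 - 4 * γ₁ * C := Real.sq_sqrt (by nlinarith [sq_nonneg s₁])
    have hr₁nonneg : 0 ≤ r₁ := Real.sqrt_nonneg _
    have hr₁lt1 : r₁ < 1 := by nlinarith [mul_pos hγ₁pos hCpos]
    have hs₁ler₁ : s₁ ≤ r₁ := by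
      rw [hr₁]
      exact Real.le_sqrt' (lt_of_le_of_lt (by linarith) hx₀lt) |>.mpr (by nlinarith) 
    set σ₁ := (1 - r₁) / (2 * γ₁) with hσ₁
    have hσ₁pos : 0 < σ₁ := div_pos (by linarith) (by linarith)
    have hσ₁eq : γ₁ * σ₁ = (1 - r₁) / 2 := by rw [hσ₁]; field_simp
    have hEq1 : C + γ₁ * σ₁ ^ 2 = σ₁ := by
      have h2 : (γ₁ * σ₁) ^ 2 = ((1 - r₁) / 2) ^ 2 := by rw [hσ₁eq]
      have h : γ₁ * (C + γ₁ * σ₁ ^ 2) = γ₁ * σ₁ := by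
        linear_combination h2 - hσ₁eq + (1 / 4) * hr₁sq
      exact mul_left_cancel₀ (ne_of_gt hγ₁pos) h
    refine ⟨σ₀, σ₁, hσ₀pos, hσ₁pos, le_of_eq hEq0, ?_, ?_⟩
    · have : B * e + γ₀ * σ₀ ^ 2 + γ₁ * σ₁ ^ 2 = C + γ₁ * σ₁ ^ 2 := by rw [hC]
      rw [this, hEq1]
    · have h1 : 2 * γ₀ * σ₀ = 1 - r₀ := by linarith [hσ₀eq]
      have h2 : 2 * γ₁ * σ₁ = 1 - r₁ := by linarith [hσ₁eq]
      rw [h1, h2]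
      linarith
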